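/- Let a_1, …, a_n be nonzero vectors spanning F_q^d, and for each i let H_i = { X ∈ F_q^d : X · a_i = 0 }, where X · Y = Σ_j X_j Y_j. Let L(A) be the intersection lattice: the set of all subspaces of F_q^d that arise as intersections of subfamilies of {H_1, …, H_n} (including the empty intersection F_q^d), partially ordered by inclusion; since the a_i span, its least element is {0}. Let Ψ : F_q → ℂ^× be a nontrivial additive character and let ξ ∈ F_q^d be generic, meaning that for every V ∈ L(A) with V ≠ {0} there exists X ∈ V with X · ξ ≠ 0. Then Σ_{X ∈ F_q^d} q^{ca(X)} Ψ(X · ξ) = Σ_{V ∈ L(A)} μ({0}, V) · q^{ca(V)}, where ca(X) = #{ i : X · a_i = 0 }, ca(V) = #{ i : V ⊆ H_i }, and μ is the Möbius function of the finite partially ordered set L(A). -/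
import Mathlib


open scoped BigOperators

open scoped Classical in
/-- Let `a_1, …, a_n` be nonzero vectors spanning `F_q^d` with associated
hyperplanes `H_i = {X : X ⬝ a_i = 0}`, let `LA` be the intersection lattice of the
arrangement (all intersections of subfamilies, including the empty intersection `⊤`,
ordered by inclusion, with least element `⊥ = {0}`), let `ψ` be a nontrivial additive
character and let `ξ` be generic (nonzero on every nonzero member of `LA`).  If `m` is
the Möbius function `V ↦ μ({0}, V)` of `LA` — characterised by
`∑_{W ∈ LA, W ⊆ V} m(W) = δ_{V,{0}}` — then
`∑_{X ∈ F_q^d} q^{ca(X)} ψ(X ⬝ ξ) = ∑_{V ∈ LA} m(V) q^{ca(V)}`. -/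
theorem fourier_sum_eq_mobius_sum
    (F : Type*) [Field F] [Fintype F]
    (d n : ℕ) (a : Fin n → Fin d → F)
    (ha : ∀ i, a i ≠ 0)
    (hspan : Submodule.span F (Set.range a) = ⊤)
    (H : Fin n → Submodule F (Fin d → F))
    (hH : ∀ i, H i =
      LinearMap.ker (∑ j : Fin d, a i j • LinearMap.proj j : (Fin d → F) →ₗ[F] F))
    (LA : Finset (Submodule F (Fin d → F)))
    (hLA : ∀ V : Submodule F (Fin d → F),
      V ∈ LA ↔ ∃ S : Finset (Fin n), V = ⨅ i ∈ S, H i)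
    (ψ : AddChar F ℂ) (hψ : ψ ≠ 1) (ξ : Fin d → F)
    (hgen : ∀ V ∈ LA, V ≠ ⊥ → ∃ X ∈ V, ∑ j : Fin d, X j * ξ j ≠ 0)
    (m : Submodule F (Fin d → F) → ℂ)
    (hm : ∀ V ∈ LA, ∑ W ∈ LA.filter (fun W => W ≤ V), m W =
      if V = ⊥ then 1 else 0) :
    ∑ X : Fin d → F,
        (Fintype.card F : ℂ) ^ (Finset.univ.filter fun i : Fin n => X ∈ H i).card *
          ψ (∑ j : Fin d, X j * ξ j) =
      ∑ V ∈ LA, m V *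
        (Fintype.card F : ℂ) ^ (Finset.univ.filter fun i : Fin n => V ≤ H i).card := by
  classical
  -- notation
  set dot : (Fin d → F) → F := fun X => ∑ j : Fin d, X j * ξ j with hdotdef
  have hdot_add : ∀ X Y, dot (X + Y) = dot X + dot Y := by
    intro X Y
    simp [dot, add_mul, Finset.sum_add_distrib]
  have hdot_smul : ∀ (t : F) X, dot (t • X) = t * dot X := by
    intro t X
    simp [dot, Finset.mul_sum, mul_assoc]
  have hdot_zero : dot 0 = 0 := by simp [dot]
  set VX : (Fin d → F) → Submodule F (Fin d → F) :=
    fun X => ⨅ i ∈ Finset.univ.filter (fun i => X ∈ H i), H i with hVXdef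
  have hmemVX : ∀ X, X ∈ VX X := by
    intro X
    simp only [VX, Submodule.mem_iInf]
    intro i hi
    exact (Finset.mem_filter.mp hi).2
  have hVX_le : ∀ X i, X ∈ H i → VX X ≤ H i := by
    intro X i hXi
    exact iInf₂_le i (by simp [hXi])
  have hVX_mem_LA : ∀ X, VX X ∈ LA := fun X => (hLA _).mpr ⟨_, rfl⟩
  have hmem_iff : ∀ V ∈ LA, ∀ X, X ∈ V ↔ VX X ≤ V := by
    intro V hV X
    obtain ⟨S, rfl⟩ := (hLA V).mp hV
    constructor
    · intro hXV
      simp only [Submodule.mem_iInf] at hXV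
      refine le_iInf₂ fun i hi => ?_
      refine iInf₂_le i ?_
      simp only [Finset.mem_filter, Finset.mem_univ, true_and]
      exact hXV i hi
    · intro h
      exact h (hmemVX X)
  have hca : ∀ X, (Finset.univ.filter fun i : Fin n => X ∈ H i)
      = (Finset.univ.filter fun i : Fin n => VX X ≤ H i) := by
    intro X
    ext i
    simp only [Finset.mem_filter, Finset.mem_univ, true_and]
    exact ⟨fun h => hVX_le X i h, fun h => h (hmemVX X)⟩
  -- character sum over a nonzero member of LA vanishes
  have hchar : ∀ V ∈ LA, V ≠ ⊥ →
      ∑ X ∈ Finset.univ.filter (fun X => X ∈ V), ψ (dot X) = 0 := by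
    intro V hV hVne
    obtain ⟨X0, hX0V, hX0⟩ := hgen V hV hVne
    obtain ⟨s, hs⟩ := AddChar.ne_one_iff.mp hψ
    set χ : AddChar V ℂ :=
      { toFun := fun x => ψ (dot x.1)
        map_zero_eq_one' := by simp [hdot_zero]
        map_add_eq_mul' := by
          intro x y
          simp only [Submodule.coe_add, hdot_add, AddChar.map_add_eq_mul] } with hχdef
    have hχne : χ ≠ 1 := by
      rw [AddChar.ne_one_iff]
      refine ⟨⟨(s / dot X0) • X0, V.smul_mem _ hX0V⟩, ?_⟩
      show ψ (dot ((s / dot X0) • X0)) ≠ 1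
      rw [hdot_smul, div_mul_cancel₀ _ hX0]
      exact hs
    have h0 : ∑ x : V, χ x = 0 := AddChar.sum_eq_zero_of_ne_one hχne
    calc ∑ X ∈ Finset.univ.filter (fun X => X ∈ V), ψ (dot X)
        = ∑ x : V, ψ (dot (x : Fin d → F)) :=
          Finset.sum_subtype _ (by simp) (fun X => ψ (dot X))
      _ = 0 := h0
  -- the fiber sums
  set f : Submodule F (Fin d → F) → ℂ :=
    fun V => ∑ X ∈ Finset.univ.filter (fun X => VX X = V), ψ (dot X) with hfdef
  have hsumf : ∀ V ∈ LA, ∑ W ∈ LA.filter (fun W => W ≤ V), f W =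
      if V = ⊥ then 1 else 0 := by
    intro V hV
    have hmaps : ∀ X ∈ Finset.univ.filter (fun X => X ∈ V),
        VX X ∈ LA.filter (fun W => W ≤ V) := by
      intro X hX
      refine Finset.mem_filter.mpr ⟨hVX_mem_LA X, ?_⟩
      exact (hmem_iff V hV X).mp (Finset.mem_filter.mp hX).2
    have h1 : ∑ W ∈ LA.filter (fun W => W ≤ V), f W
        = ∑ X ∈ Finset.univ.filter (fun X => X ∈ V), ψ (dot X) := by
      rw [← Finset.sum_fiberwise_of_maps_to hmaps (fun X => ψ (dot X))]
      refine Finset.sum_congr rfl fun W hW => ?_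
      obtain ⟨hWLA, hWV⟩ := Finset.mem_filter.mp hW
      refine Finset.sum_congr ?_ fun _ _ => rfl
      ext X
      simp only [Finset.mem_filter, Finset.mem_univ, true_and]
      constructor
      · intro h
        refine ⟨?_, h⟩
        have := hmemVX X
        rw [h] at this
        exact hWV this
      · rintro ⟨-, h⟩; exact h
    rw [h1]
    by_cases hb : V = ⊥
    · subst hb
      have : Finset.univ.filter (fun X => X ∈ (⊥ : Submodule F (Fin d → F)))
          = {0} := by
        ext X
        simp [Submodule.mem_bot]
      rw [this]
      simp [hdot_zero]
    · rw [if_neg hb]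
      exact hchar V hV hb
  -- f agrees with m on LA by strong induction
  have hfm : ∀ k, ∀ V ∈ LA, (LA.filter (fun W => W ≤ V)).card ≤ k → f V = m V := by
    intro k
    induction k with
    | zero =>
      intro V hV hcard
      have : V ∈ LA.filter (fun W => W ≤ V) := Finset.mem_filter.mpr ⟨hV, le_rfl⟩
      have := Finset.card_pos.mpr ⟨V, this⟩
      omega
    | succ k ih =>
      intro V hV hcard
      have hVmem : V ∈ LA.filter (fun W => W ≤ V) := Finset.mem_filter.mpr ⟨hV, le_rfl⟩
      have hsub : ∀ W ∈ (LA.filter (fun W => W ≤ V)).erase V, f W = m W := by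
        intro W hW
        obtain ⟨hWne, hWm⟩ := Finset.mem_erase.mp hW
        obtain ⟨hWLA, hWV⟩ := Finset.mem_filter.mp hWm
        apply ih W hWLA
        have hsubset : LA.filter (fun U => U ≤ W)
            ⊆ (LA.filter (fun U => U ≤ V)).erase V := by
          intro U hU
          obtain ⟨hULA, hUW⟩ := Finset.mem_filter.mp hU
          refine Finset.mem_erase.mpr ⟨?_, Finset.mem_filter.mpr ⟨hULA, hUW.trans hWV⟩⟩
          rintro rfl
          exact hWne (le_antisymm hWV hUW)
        have h1 : (LA.filter (fun U => U ≤ W)).card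
            ≤ ((LA.filter (fun U => U ≤ V)).erase V).card :=
          Finset.card_le_card hsubset
        have h2 : ((LA.filter (fun U => U ≤ V)).erase V).card
            = (LA.filter (fun U => U ≤ V)).card - 1 :=
          Finset.card_erase_of_mem hVmem
        omega
      have e1 := hsumf V hV
      have e2 := hm V hV
      rw [← Finset.add_sum_erase _ f hVmem] at e1
      rw [← Finset.add_sum_erase _ m hVmem] at e2
      have e3 : ∑ W ∈ (LA.filter (fun W => W ≤ V)).erase V, f W
          = ∑ W ∈ (LA.filter (fun W => W ≤ V)).erase V, m W :=
        Finset.sum_congr rfl hsub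
      linear_combination e1 - e2 - e3
  -- main computation
  calc ∑ X : Fin d → F,
        (Fintype.card F : ℂ) ^ (Finset.univ.filter fun i : Fin n => X ∈ H i).card *
          ψ (dot X)
      = ∑ V ∈ LA, ∑ X ∈ Finset.univ.filter (fun X => VX X = V),
          (Fintype.card F : ℂ) ^ (Finset.univ.filter fun i : Fin n => X ∈ H i).card *
            ψ (dot X) :=
        (Finset.sum_fiberwise_of_maps_to (fun X _ => hVX_mem_LA X) _).symm
    _ = ∑ V ∈ LA, m V *
          (Fintype.card F : ℂ) ^ (Finset.univ.filter fun i : Fin n => V ≤ H i).card := by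
        refine Finset.sum_congr rfl fun V hV => ?_
        have hinner : ∀ X ∈ Finset.univ.filter (fun X => VX X = V),
            (Fintype.card F : ℂ) ^ (Finset.univ.filter fun i : Fin n => X ∈ H i).card *
              ψ (dot X)
            = (Fintype.card F : ℂ) ^
                (Finset.univ.filter fun i : Fin n => V ≤ H i).card * ψ (dot X) := by
          intro X hX
          have hXV : VX X = V := (Finset.mem_filter.mp hX).2
          rw [hca X, hXV]
        rw [Finset.sum_congr rfl hinner, ← Finset.mul_sum]
        have : f V = m V := hfm (LA.filter (fun W => W ≤ V)).card V hV le_rfl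
        rw [show (∑ X ∈ Finset.univ.filter (fun X => VX X = V), ψ (dot X)) = f V from rfl,
          this]
        ring
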